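/- Let ⟨·⟩_g be ℚ-valued correlators that satisfy Theorem 1.2: (2g+n-1)⟨τ_0 ∏_{j=1}^n τ_{d_j}⟩_g = (1/12)⟨τ_0^4 ∏ τ_{d_j}⟩_{g-1} + (1/2)∑_{I⊔J, g'}⟨τ_0^2 ∏_I τ_{d_i}⟩_{g'}⟨τ_0^2 ∏_J τ_{d_j}⟩_{g-g'}, and also the simplified recursion: (2g+n-1)⟨τ_r ∏_{j=1}^n τ_{d_j}⟩_g = (2r+3)⟨τ_0 τ_{r+1} ∏ τ_{d_j}⟩_g - (1/6)⟨τ_0^3 τ_r ∏ τ_{d_j}⟩_{g-1} - ∑_{I⊔J,g'}⟨τ_0 τ_r ∏_I τ_{d_i}⟩_{g'}⟨τ_0^2 ∏_J τ_{d_j}⟩_{g-g'}. Then they satisfy Theorem 1.1: (2g+n-1)(2g+n-2)⟨∏_{j=1}^n τ_{d_j}⟩_g = ((2d_1+3)/12)⟨τ_0^4 τ_{d_1+1} ∏_{j=2}^n τ_{d_j}⟩_{g-1} - ((2g+n-1)/6)⟨τ_0^3 ∏_{j=1}^n τ_{d_j}⟩_{g-1} + ∑_{I⊔J,g'}(2d_1+3)⟨τ_{d_1+1}τ_0^2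 ∏_I τ_{d_i}⟩_{g'}⟨τ_0^2 ∏_J τ_{d_j}⟩_{g-g'} - ∑_{I⊔J,g'}(2g+n-1)⟨τ_{d_1}τ_0 ∏_I τ_{d_i}⟩_{g'}⟨τ_0^2 ∏_J τ_{d_j}⟩_{g-g'}. -/
import Mathlib


open Finset

lemma myPowersetMap {α β : Type*} (f : α ↪ β) (s : Finset α) :
    (s.map f).powerset = s.powerset.map ⟨Finset.map f, Finset.map_injective f⟩ := by
  classical
  ext t
  simp only [mem_powerset, mem_map, Function.Embedding.coeFn_mk]
  constructor
  · intro h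
    refine ⟨s.filter (fun a => f a ∈ t), filter_subset _ _, ?_⟩
    ext b
    simp only [mem_map, mem_filter]
    constructor
    · rintro ⟨a, ⟨-, ha⟩, rfl⟩; exact ha
    · intro hb
      obtain ⟨a, ha, rfl⟩ := mem_map.1 (h hb)
      exact ⟨a, ⟨ha, hb⟩, rfl⟩
  · rintro ⟨u, hu, rfl⟩
    exact map_subset_map.2 hu

lemma sum_powerset_finsucc {m : ℕ} (f : Finset (Fin (m + 1)) → ℚ) :
    ∑ I ∈ (univ : Finset (Fin (m + 1))).powerset, f I
      = ∑ I ∈ (univ : Finset (Fin m)).powerset, f (I.map ⟨Fin.succ, Fin.succ_injective _⟩)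
      + ∑ I ∈ (univ : Finset (Fin m)).powerset,
          f (insert 0 (I.map ⟨Fin.succ, Fin.succ_injective _⟩)) := by
  rw [Fin.univ_succ, cons_eq_insert,
    Finset.sum_powerset_insert (by simp [Fin.succ_ne_zero]),
    myPowersetMap, sum_map, sum_map]
  rfl

lemma mapConsUniv {m : ℕ} (a : ℕ) (d : Fin m → ℕ) :
    Multiset.map (Fin.cons a d) (univ : Finset (Fin (m + 1))).val
      = a ::ₘ Multiset.map d (univ : Finset (Fin m)).val := by
  rw [Fin.univ_succ, Finset.cons_val, Multiset.map_cons, Fin.cons_zero, Finset.map_val,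
    Multiset.map_map]
  congr 1

lemma mapConsMapSucc {m : ℕ} (a : ℕ) (d : Fin m → ℕ) (I : Finset (Fin m)) :
    Multiset.map (Fin.cons a d) (I.map ⟨Fin.succ, Fin.succ_injective _⟩).val
      = Multiset.map d I.val := by
  rw [Finset.map_val, Multiset.map_map]
  exact Multiset.map_congr rfl (fun x _ => Fin.cons_succ (α := fun _ => ℕ) a d x)

lemma mapConsInsert {m : ℕ} (a : ℕ) (d : Fin m → ℕ) (I : Finset (Fin m)) :
    Multiset.map (Fin.cons a d)
        (insert (0 : Fin (m+1)) (I.map ⟨Fin.succ, Fin.succ_injective _⟩)).val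
      = a ::ₘ Multiset.map d I.val := by
  rw [Finset.insert_val_of_notMem (by simp [Fin.succ_ne_zero]), Multiset.map_cons,
    Fin.cons_zero, mapConsMapSucc]

lemma sdiffMapSucc {m : ℕ} (I : Finset (Fin m)) :
    (univ : Finset (Fin (m+1))) \ (I.map ⟨Fin.succ, Fin.succ_injective _⟩)
      = insert 0 ((univ \ I).map ⟨Fin.succ, Fin.succ_injective _⟩) := by
  ext x
  cases x using Fin.cases <;>
    simp [Fin.succ_ne_zero, eq_comm (a := (0 : Fin (m+1))), Fin.succ_ne_zero]

lemma sdiffInsert {m : ℕ} (I : Finset (Fin m)) :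
    (univ : Finset (Fin (m+1))) \ insert 0 (I.map ⟨Fin.succ, Fin.succ_injective _⟩)
      = (univ \ I).map ⟨Fin.succ, Fin.succ_injective _⟩ := by
  ext x
  cases x using Fin.cases <;>
    simp [Fin.succ_ne_zero, eq_comm (a := (0 : Fin (m+1))), Fin.succ_ne_zero]

lemma symSum {m : ℕ} (C : ℕ → Multiset ℕ → ℚ) (g a : ℕ) (d : Fin m → ℕ) :
    ∑ I ∈ (univ : Finset (Fin m)).powerset, ∑ g' ∈ range (g + 1),
        C g' (0 ::ₘ 0 ::ₘ Multiset.map d I.val) *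
          C (g - g') (0 ::ₘ 0 ::ₘ a ::ₘ Multiset.map d (univ \ I).val)
      = ∑ I ∈ (univ : Finset (Fin m)).powerset, ∑ g' ∈ range (g + 1),
        C g' (0 ::ₘ 0 ::ₘ a ::ₘ Multiset.map d I.val) *
          C (g - g') (0 ::ₘ 0 ::ₘ Multiset.map d (univ \ I).val) := by
  refine Finset.sum_nbij' (fun I => univ \ I) (fun I => univ \ I)
    (fun I _ => by simp) (fun I _ => by simp)
    (fun I hI => _root_.sdiff_sdiff_eq_self (mem_powerset.1 hI))
    (fun I hI => _root_.sdiff_sdiff_eq_self (mem_powerset.1 hI)) ?_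
  intro I hI
  rw [← Finset.sum_range_reflect]
  refine Finset.sum_congr rfl fun g' hg' => ?_
  have hg'le : g' ≤ g := Nat.lt_succ_iff.1 (mem_range.1 hg')
  have h1 : univ \ (univ \ I) = I := _root_.sdiff_sdiff_eq_self (mem_powerset.1 hI)
  simp only [Nat.add_sub_cancel, Nat.sub_sub_self hg'le, h1]
  ring

/-- The algebraic equivalence in Section 2 of the paper: correlators satisfying
Theorem 1.2 and the simplified recursion
(2g+n-1)⟨τ_r ∏τ_{d_j}⟩_g = (2r+3)⟨τ₀τ_{r+1}∏τ_{d_j}⟩_g - (1/6)⟨τ₀³τ_r∏τ_{d_j}⟩_{g-1}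
  - ∑⟨τ₀τ_r∏_I⟩_{g'}⟨τ₀²∏_J⟩_{g-g'}
also satisfy Theorem 1.1. Here the distinguished index is d₁ and d : Fin m → ℕ lists
d₂,…,d_n (so the total number of marked points is m + 1 and 2g+n-1 = 2g+m). -/
theorem thm11_from_thm12_and_simplified (C : ℕ → Multiset ℕ → ℚ)
    (hT12 : ∀ (g n : ℕ) (d : Fin n → ℕ),
      (2 * (g : ℚ) + n - 1) * C g (0 ::ₘ Multiset.map d univ.val)
        = (1 / 12) * (if 1 ≤ g then
              C (g - 1) (0 ::ₘ 0 ::ₘ 0 ::ₘ 0 ::ₘ Multiset.map d univ.val) else 0)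
          + (1 / 2) * ∑ I ∈ univ.powerset, ∑ g' ∈ range (g + 1),
              C g' (0 ::ₘ 0 ::ₘ Multiset.map d I.val) *
                C (g - g') (0 ::ₘ 0 ::ₘ Multiset.map d (univ \ I).val))
    (hSimp : ∀ (g n r : ℕ) (d : Fin n → ℕ),
      (2 * (g : ℚ) + n - 1) * C g (r ::ₘ Multiset.map d univ.val)
        = (2 * (r : ℚ) + 3) * C g (0 ::ₘ (r + 1) ::ₘ Multiset.map d univ.val)
          - (1 / 6) * (if 1 ≤ g then
              C (g - 1) (0 ::ₘ 0 ::ₘ 0 ::ₘ r ::ₘ Multiset.map d univ.val) else 0)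
          - ∑ I ∈ univ.powerset, ∑ g' ∈ range (g + 1),
              C g' (0 ::ₘ r ::ₘ Multiset.map d I.val) *
                C (g - g') (0 ::ₘ 0 ::ₘ Multiset.map d (univ \ I).val)) :
    ∀ (g m : ℕ) (d1 : ℕ) (d : Fin m → ℕ),
      (2 * (g : ℚ) + m) * (2 * (g : ℚ) + m - 1) * C g (d1 ::ₘ Multiset.map d univ.val)
        = ((2 * (d1 : ℚ) + 3) / 12) * (if 1 ≤ g then
              C (g - 1) (0 ::ₘ 0 ::ₘ 0 ::ₘ 0 ::ₘ (d1 + 1) ::ₘ Multiset.map d univ.val) else 0)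
          - ((2 * (g : ℚ) + m) / 6) * (if 1 ≤ g then
              C (g - 1) (0 ::ₘ 0 ::ₘ 0 ::ₘ d1 ::ₘ Multiset.map d univ.val) else 0)
          + ∑ I ∈ univ.powerset, ∑ g' ∈ range (g + 1),
              (2 * (d1 : ℚ) + 3) * C g' ((d1 + 1) ::ₘ 0 ::ₘ 0 ::ₘ Multiset.map d I.val) *
                C (g - g') (0 ::ₘ 0 ::ₘ Multiset.map d (univ \ I).val)
          - ∑ I ∈ univ.powerset, ∑ g' ∈ range (g + 1),
              (2 * (g : ℚ) + m) * C g' (d1 ::ₘ 0 ::ₘ Multiset.map d I.val) *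
                C (g - g') (0 ::ₘ 0 ::ₘ Multiset.map d (univ \ I).val) := by
  intro g m d1 d
  have hS := hSimp g m d1 d
  have hT := hT12 g (m + 1) (Fin.cons (d1 + 1) d)
  rw [mapConsUniv] at hT
  push_cast at hT
  -- reorganize the big sum in hT
  have key : (∑ I ∈ (univ : Finset (Fin (m+1))).powerset, ∑ g' ∈ range (g + 1),
        C g' (0 ::ₘ 0 ::ₘ Multiset.map (Fin.cons (d1 + 1) d) I.val) *
          C (g - g') (0 ::ₘ 0 ::ₘ Multiset.map (Fin.cons (d1 + 1) d) (univ \ I).val))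
      = 2 * ∑ I ∈ (univ : Finset (Fin m)).powerset, ∑ g' ∈ range (g + 1),
          C g' (0 ::ₘ 0 ::ₘ (d1 + 1) ::ₘ Multiset.map d I.val) *
            C (g - g') (0 ::ₘ 0 ::ₘ Multiset.map d (univ \ I).val) := by
    rw [sum_powerset_finsucc]
    have h1 : ∀ I ∈ (univ : Finset (Fin m)).powerset,
        (∑ g' ∈ range (g + 1),
          C g' (0 ::ₘ 0 ::ₘ Multiset.map (Fin.cons (d1 + 1) d)
              (I.map ⟨Fin.succ, Fin.succ_injective _⟩).val) *
            C (g - g') (0 ::ₘ 0 ::ₘ Multiset.map (Fin.cons (d1 + 1) d)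
              (univ \ I.map ⟨Fin.succ, Fin.succ_injective _⟩).val))
        = ∑ g' ∈ range (g + 1),
            C g' (0 ::ₘ 0 ::ₘ Multiset.map d I.val) *
              C (g - g') (0 ::ₘ 0 ::ₘ (d1 + 1) ::ₘ Multiset.map d (univ \ I).val) := by
      intro I _
      refine Finset.sum_congr rfl fun g' _ => ?_
      rw [mapConsMapSucc, sdiffMapSucc, mapConsInsert]
    have h2 : ∀ I ∈ (univ : Finset (Fin m)).powerset,
        (∑ g' ∈ range (g + 1),
          C g' (0 ::ₘ 0 ::ₘ Multiset.map (Fin.cons (d1 + 1) d)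
              (insert 0 (I.map ⟨Fin.succ, Fin.succ_injective _⟩)).val) *
            C (g - g') (0 ::ₘ 0 ::ₘ Multiset.map (Fin.cons (d1 + 1) d)
              (univ \ insert 0 (I.map ⟨Fin.succ, Fin.succ_injective _⟩)).val))
        = ∑ g' ∈ range (g + 1),
            C g' (0 ::ₘ 0 ::ₘ (d1 + 1) ::ₘ Multiset.map d I.val) *
              C (g - g') (0 ::ₘ 0 ::ₘ Multiset.map d (univ \ I).val) := by
      intro I _
      refine Finset.sum_congr rfl fun g' _ => ?_
      rw [mapConsInsert, sdiffInsert, mapConsMapSucc]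
    rw [Finset.sum_congr rfl h1, Finset.sum_congr rfl h2, symSum]
    ring
  rw [key] at hT
  -- rewrite the two sums in the goal
  have swap3 : ∀ X : Multiset ℕ, (d1 + 1) ::ₘ 0 ::ₘ 0 ::ₘ X = 0 ::ₘ 0 ::ₘ (d1 + 1) ::ₘ X := by
    intro X
    rw [Multiset.cons_swap (d1 + 1) 0, Multiset.cons_swap (d1 + 1) 0]
  have gs1 : (∑ I ∈ (univ : Finset (Fin m)).powerset, ∑ g' ∈ range (g + 1),
        (2 * (d1 : ℚ) + 3) * C g' ((d1 + 1) ::ₘ 0 ::ₘ 0 ::ₘ Multiset.map d I.val) *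
          C (g - g') (0 ::ₘ 0 ::ₘ Multiset.map d (univ \ I).val))
      = (2 * (d1 : ℚ) + 3) * ∑ I ∈ (univ : Finset (Fin m)).powerset, ∑ g' ∈ range (g + 1),
          C g' (0 ::ₘ 0 ::ₘ (d1 + 1) ::ₘ Multiset.map d I.val) *
            C (g - g') (0 ::ₘ 0 ::ₘ Multiset.map d (univ \ I).val) := by
    rw [Finset.mul_sum]
    refine Finset.sum_congr rfl fun I _ => ?_
    rw [Finset.mul_sum]
    refine Finset.sum_congr rfl fun g' _ => ?_
    rw [swap3, mul_assoc]
  have gs2 : (∑ I ∈ (univ : Finset (Fin m)).powerset, ∑ g' ∈ range (g + 1),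
        (2 * (g : ℚ) + m) * C g' (d1 ::ₘ 0 ::ₘ Multiset.map d I.val) *
          C (g - g') (0 ::ₘ 0 ::ₘ Multiset.map d (univ \ I).val))
      = (2 * (g : ℚ) + m) * ∑ I ∈ (univ : Finset (Fin m)).powerset, ∑ g' ∈ range (g + 1),
          C g' (0 ::ₘ d1 ::ₘ Multiset.map d I.val) *
            C (g - g') (0 ::ₘ 0 ::ₘ Multiset.map d (univ \ I).val) := by
    rw [Finset.mul_sum]
    refine Finset.sum_congr rfl fun I _ => ?_
    rw [Finset.mul_sum]
    refine Finset.sum_congr rfl fun g' _ => ?_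
    rw [Multiset.cons_swap d1 0, mul_assoc]
  rw [gs1, gs2]
  linear_combination (2 * (g : ℚ) + m) * hS + (2 * (d1 : ℚ) + 3) * hT
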